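/- Doubling property of matrix reverse Hölder weights: Let n, d ≥ 1 be integers and 1 < p < ∞. If V is a matrix weight on ℝⁿ belonging to 𝓑_p with constant C_V, then V defines a doubling measure: there exists γ > 0 depending only on n, p and C_V such that for every x ∈ ℝⁿ and every r > 0, ∫_{Q(x,2r)} V(y) dy ≤ γ ∫_{Q(x,r)} V(y) dy in the positive semidefinite order. -/

import Mathlib

open MeasureTheory
open scoped ComplexOrder

noncomputable section

/-- The open cube in `ℝⁿ` centered at `x` with half side length `r` (side length `2r`). -/
def cube {n : ℕ} (x : Fin n → ℝ) (r : ℝ) : Set (Fin n → ℝ) :=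
  {y | ∀ i, |y i - x i| < r}

/-- Entrywise integral of a real matrix-valued function over a set. -/
def matInt {n d : ℕ} (V : (Fin n → ℝ) → Matrix (Fin d) (Fin d) ℝ)
    (s : Set (Fin n → ℝ)) : Matrix (Fin d) (Fin d) ℝ :=
  Matrix.of fun i j => ∫ y in s, V y i j

/-- Entrywise average of a real matrix-valued function over a set. -/
def matAvg {n d : ℕ} (V : (Fin n → ℝ) → Matrix (Fin d) (Fin d) ℝ)
    (s : Set (Fin n → ℝ)) : Matrix (Fin d) (Fin d) ℝ :=
  Matrix.of fun i j => ⨍ y in s, V y i j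

/-- The quadratic form `⟨A e, e⟩`. -/
def qf {d : ℕ} (A : Matrix (Fin d) (Fin d) ℝ) (e : Fin d → ℝ) : ℝ :=
  dotProduct e (A.mulVec e)

/-- Squared Euclidean norm of a real vector. -/
def vnormSq {d : ℕ} (e : Fin d → ℝ) : ℝ := ∑ i, e i ^ 2

/-- The Euclidean operator norm of a real square matrix (its largest singular value). -/
def matOpNorm {d : ℕ} (A : Matrix (Fin d) (Fin d) ℝ) : ℝ :=
  sSup {t : ℝ | ∃ e : Fin d → ℝ, vnormSq e = 1 ∧ t = Real.sqrt (vnormSq (A.mulVec e))}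

/-- `V` is a matrix weight: measurable, a.e. symmetric positive semidefinite, and with
locally integrable operator norm. -/
def IsMatrixWeight {n d : ℕ} (V : (Fin n → ℝ) → Matrix (Fin d) (Fin d) ℝ) : Prop :=
  (∀ i j, Measurable fun x => V x i j) ∧
  (∀ᵐ (x : Fin n → ℝ) ∂volume, (V x).PosSemidef) ∧
  ∀ (x : Fin n → ℝ) (r : ℝ), 0 < r → IntegrableOn (fun y => matOpNorm (V y)) (cube x r)

/-- The matrix reverse Hölder class `𝓑_p` with constant `C`. -/
def MemBp {n d : ℕ} (p C : ℝ) (V : (Fin n → ℝ) → Matrix (Fin d) (Fin d) ℝ) : Prop :=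
  (∀ (x : Fin n → ℝ) (r : ℝ), 0 < r →
    IntegrableOn (fun y => matOpNorm (V y) ^ p) (cube x r)) ∧
  ∀ (x : Fin n → ℝ) (r : ℝ), 0 < r → ∀ e : Fin d → ℝ,
    (⨍ y in cube x r, qf (V y) e ^ p) ^ (1 / p) ≤ C * qf (matAvg V (cube x r)) e

/-- The scalar reverse Hölder class `B_p` with constant `C`. -/
def MemBpScalar {n : ℕ} (p C : ℝ) (v : (Fin n → ℝ) → ℝ) : Prop :=
  (∀ (x : Fin n → ℝ) (r : ℝ), 0 < r → IntegrableOn (fun y => v y ^ p) (cube x r)) ∧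
  ∀ (x : Fin n → ℝ) (r : ℝ), 0 < r →
    (⨍ y in cube x r, v y ^ p) ^ (1 / p) ≤ C * ⨍ y in cube x r, v y

/-- The averaged matrix `Ψ(x,r;V) = r^{2-n} ∫_{Q(x,r)} V`. -/
def Psi {n d : ℕ} (x : Fin n → ℝ) (r : ℝ)
    (V : (Fin n → ℝ) → Matrix (Fin d) (Fin d) ℝ) : Matrix (Fin d) (Fin d) ℝ :=
  r ^ ((2 : ℝ) - n) • matInt V (cube x r)

/-- The nondegeneracy class `ND`. -/
def MemND {n d : ℕ} (V : (Fin n → ℝ) → Matrix (Fin d) (Fin d) ℝ) : Prop :=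
  ∀ E : Set (Fin n → ℝ), MeasurableSet E → 0 < volume E → (matInt V E).PosDef

/-- The set of radii used to define the lower auxiliary function. -/
def lowerSet {n d : ℕ} (V : (Fin n → ℝ) → Matrix (Fin d) (Fin d) ℝ)
    (x : Fin n → ℝ) : Set ℝ :=
  {r : ℝ | 0 < r ∧ ∃ e : Fin d → ℝ, vnormSq e = 1 ∧ qf (Psi x r V) e ≤ 1}

/-- The lower auxiliary function `m̲(x,V)`. -/
def mLower {n d : ℕ} (V : (Fin n → ℝ) → Matrix (Fin d) (Fin d) ℝ) (x : Fin n → ℝ) : ℝ :=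
  (sSup (lowerSet V x))⁻¹

/-- The set of radii used to define the upper auxiliary function. -/
def upperSet {n d : ℕ} (V : (Fin n → ℝ) → Matrix (Fin d) (Fin d) ℝ)
    (x : Fin n → ℝ) : Set ℝ :=
  {r : ℝ | 0 < r ∧ matOpNorm (Psi x r V) ≤ 1}

/-- The upper auxiliary function `m̄(x,V)`. -/
def mUpper {n d : ℕ} (V : (Fin n → ℝ) → Matrix (Fin d) (Fin d) ℝ) (x : Fin n → ℝ) : ℝ :=
  (sSup (upperSet V x))⁻¹

/-- The set of radii used to define the scalar auxiliary function. -/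
def scalSet {n : ℕ} (v : (Fin n → ℝ) → ℝ) (x : Fin n → ℝ) : Set ℝ :=
  {r : ℝ | 0 < r ∧ r ^ ((2 : ℝ) - n) * ∫ y in cube x r, v y ≤ 1}

/-- The scalar auxiliary function `m(x,v)`. -/
def mScal {n : ℕ} (v : (Fin n → ℝ) → ℝ) (x : Fin n → ℝ) : ℝ :=
  (sSup (scalSet v x))⁻¹

/-- The positive semidefinite square root of a matrix (junk value `0` off the
positive semidefinite matrices). -/
def msqrt {d : ℕ} (A : Matrix (Fin d) (Fin d) ℝ) : Matrix (Fin d) (Fin d) ℝ :=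
  @dite _ A.PosSemidef (Classical.dec _) (fun h => (h.1.eigenvectorUnitary : Matrix (Fin d) (Fin d) ℝ) *
    Matrix.diagonal ((RCLike.ofReal (K := ℝ)) ∘ Real.sqrt ∘ h.1.eigenvalues) *
    (star h.1.eigenvectorUnitary : Matrix (Fin d) (Fin d) ℝ)) fun _ => 0

/-- The noncommutativity class `NC` with constant `N`. -/
def MemNC {n d : ℕ} (N : ℝ) (V : (Fin n → ℝ) → Matrix (Fin d) (Fin d) ℝ) : Prop :=
  ∀ (x : Fin n → ℝ) (e : Fin d → ℝ),
    N * vnormSq e ≤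
      ∫ y in cube x (mLower V x)⁻¹,
        qf (msqrt (V y) * (matInt V (cube x (mLower V x)⁻¹))⁻¹ * msqrt (V y)) e

/-- The matrix `𝓐_∞` class. -/
def MemAinf {n d : ℕ} (V : (Fin n → ℝ) → Matrix (Fin d) (Fin d) ℝ) : Prop :=
  ∀ ε : ℝ, 0 < ε → ∃ δ : ℝ, 0 < δ ∧ ∀ (x : Fin n → ℝ) (r : ℝ), 0 < r →
    ENNReal.ofReal (1 - ε) * volume (cube x r) ≤
      volume {y ∈ cube x r | (V y - δ • matAvg V (cube x r)).PosSemidef}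

/-- The smallest eigenvalue of a symmetric matrix (as the infimum of the Rayleigh
quotient over the unit sphere). -/
def lam1 {d : ℕ} (A : Matrix (Fin d) (Fin d) ℝ) : ℝ :=
  sInf {t : ℝ | ∃ e : Fin d → ℝ, vnormSq e = 1 ∧ t = qf A e}

/-- Squared Frobenius norm of the Jacobian matrix `Du(x)`. -/
def jacFrobSq {n d : ℕ} (u : (Fin n → ℝ) → Fin d → ℝ) (x : Fin n → ℝ) : ℝ :=
  ∑ j, ∑ i, (fderiv ℝ u x (Pi.single i 1) j) ^ 2

/-! ### Complex (Hermitian) versions -/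

/-- The (real-valued) quadratic form `⟨A e, e⟩` of a Hermitian matrix. -/
def qfC {d : ℕ} (A : Matrix (Fin d) (Fin d) ℂ) (e : Fin d → ℂ) : ℝ :=
  (dotProduct (star e) (A.mulVec e)).re

/-- Squared Euclidean norm of a complex vector. -/
def vnormSqC {d : ℕ} (e : Fin d → ℂ) : ℝ := ∑ i, Complex.normSq (e i)

/-- Entrywise integral of a complex matrix-valued function over a set. -/
def matIntC {n d : ℕ} (V : (Fin n → ℝ) → Matrix (Fin d) (Fin d) ℂ)
    (s : Set (Fin n → ℝ)) : Matrix (Fin d) (Fin d) ℂ :=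
  Matrix.of fun i j => ∫ y in s, V y i j

/-- Entrywise average of a complex matrix-valued function over a set. -/
def matAvgC {n d : ℕ} (V : (Fin n → ℝ) → Matrix (Fin d) (Fin d) ℂ)
    (s : Set (Fin n → ℝ)) : Matrix (Fin d) (Fin d) ℂ :=
  Matrix.of fun i j => ⨍ y in s, V y i j

/-- The Euclidean operator norm of a complex square matrix. -/
def matOpNormC {d : ℕ} (A : Matrix (Fin d) (Fin d) ℂ) : ℝ :=
  sSup {t : ℝ | ∃ e : Fin d → ℂ, vnormSqC e = 1 ∧ t = Real.sqrt (vnormSqC (A.mulVec e))}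

/-- `V` is a Hermitian matrix weight. -/
def IsHermWeight {n d : ℕ} (V : (Fin n → ℝ) → Matrix (Fin d) (Fin d) ℂ) : Prop :=
  (∀ i j, Measurable fun x => V x i j) ∧
  (∀ᵐ (x : Fin n → ℝ) ∂volume, (V x).PosSemidef) ∧
  ∀ (x : Fin n → ℝ) (r : ℝ), 0 < r → IntegrableOn (fun y => matOpNormC (V y)) (cube x r)

/-- The nondegeneracy class `ND` for Hermitian weights. -/
def MemNDC {n d : ℕ} (V : (Fin n → ℝ) → Matrix (Fin d) (Fin d) ℂ) : Prop :=
  ∀ E : Set (Fin n → ℝ), MeasurableSet E → 0 < volume E → (matIntC V E).PosDef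

/-- The matrix `𝓐_∞` class for Hermitian weights. -/
def MemAinfC {n d : ℕ} (V : (Fin n → ℝ) → Matrix (Fin d) (Fin d) ℂ) : Prop :=
  ∀ ε : ℝ, 0 < ε → ∃ δ : ℝ, 0 < δ ∧ ∀ (x : Fin n → ℝ) (r : ℝ), 0 < r →
    ENNReal.ofReal (1 - ε) * volume (cube x r) ≤
      volume {y ∈ cube x r | (V y - δ • matAvgC V (cube x r)).PosSemidef}

/-- The geometric average `exp(⨍_s ln w)` of a nonnegative function, with the
conventions `ln 0 = -∞` and `exp (-∞) = 0`. -/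
def geomMean {n : ℕ} (w : (Fin n → ℝ) → ℝ) (s : Set (Fin n → ℝ)) : ℝ :=
  @ite _ ((∀ᵐ y ∂(volume.restrict s), 0 < w y) ∧
      IntegrableOn (fun y => Real.log (w y)) s) (Classical.dec _)
    (Real.exp (⨍ y in s, Real.log (w y))) 0

/-- The scalar `A_∞` class. -/
def ScalarAinf {n : ℕ} (w : (Fin n → ℝ) → ℝ) : Prop :=
  ∀ ε : ℝ, 0 < ε → ∃ δ : ℝ, 0 < δ ∧ ∀ (x : Fin n → ℝ) (r : ℝ), 0 < r →
    ENNReal.ofReal (1 - ε) * volume (cube x r) ≤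
      volume {y ∈ cube x r | δ * ⨍ z in cube x r, w z ≤ w y}

end
section AuxDoubling

open Finset

variable {n d : ℕ}

lemma cube_eq (x : Fin n → ℝ) (r : ℝ) :
    cube x r = Set.pi Set.univ fun i => Set.Ioo (x i - r) (x i + r) := by
  ext y
  simp only [cube, Set.mem_setOf_eq, Set.mem_pi, Set.mem_univ, forall_true_left, Set.mem_Ioo,
    abs_lt]
  exact forall_congr' fun i => by constructor <;> intro h <;> constructor <;> linarith [h.1, h.2]

lemma measurableSet_cube (x : Fin n → ℝ) (r : ℝ) : MeasurableSet (cube x r) := by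
  rw [cube_eq]
  exact MeasurableSet.pi Set.countable_univ fun i _ => measurableSet_Ioo

lemma cube_mono (x : Fin n → ℝ) {r s : ℝ} (h : r ≤ s) : cube x r ⊆ cube x s :=
  fun y hy i => (hy i).trans_le h

lemma volume_cube (x : Fin n → ℝ) {r : ℝ} (hr : 0 ≤ r) :
    volume (cube x r) = ENNReal.ofReal ((2 * r) ^ n) := by
  rw [cube_eq, volume_pi_pi]
  simp only [Real.volume_Ioo]
  simp only [show ∀ a : ℝ, a + r - (a - r) = 2 * r from fun a => by ring]
  rw [Finset.prod_const, Finset.card_univ, Fintype.card_fin,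
    ← ENNReal.ofReal_pow (by linarith)]

lemma volume_cube_toReal (x : Fin n → ℝ) {r : ℝ} (hr : 0 ≤ r) :
    (volume (cube x r)).toReal = (2 * r) ^ n := by
  rw [volume_cube x hr, ENNReal.toReal_ofReal (by positivity)]

lemma qf_eq_sum (A : Matrix (Fin d) (Fin d) ℝ) (e : Fin d → ℝ) :
    qf A e = ∑ i, ∑ j, e i * (A i j * e j) := by
  simp [qf, dotProduct, Matrix.mulVec, Finset.mul_sum]

lemma matOpNorm_bddAbove (A : Matrix (Fin d) (Fin d) ℝ) :
    BddAbove {t : ℝ | ∃ e : Fin d → ℝ, vnormSq e = 1 ∧ t = Real.sqrt (vnormSq (A.mulVec e))} := by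
  refine ⟨Real.sqrt (∑ i, ∑ j, A i j ^ 2), ?_⟩
  rintro t ⟨e, he, rfl⟩
  apply Real.sqrt_le_sqrt
  unfold vnormSq at he ⊢
  calc ∑ i, A.mulVec e i ^ 2 = ∑ i, (∑ j, A i j * e j) ^ 2 := by
        simp [Matrix.mulVec, dotProduct]
    _ ≤ ∑ i, (∑ j, A i j ^ 2) * (∑ j, e j ^ 2) :=
        Finset.sum_le_sum fun i _ => Finset.sum_mul_sq_le_sq_mul_sq _ _ _
    _ = ∑ i, ∑ j, A i j ^ 2 := by rw [he]; simp

lemma vnormSq_single (j : Fin d) : vnormSq (Pi.single j (1 : ℝ)) = 1 := by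
  simp [vnormSq, Pi.single_apply, apply_ite (fun t : ℝ => t ^ 2)]

lemma abs_entry_le_matOpNorm (A : Matrix (Fin d) (Fin d) ℝ) (i j : Fin d) :
    |A i j| ≤ matOpNorm A := by
  have h1 : A.mulVec (Pi.single j 1) = fun k => A k j := by
    ext k
    simp [Matrix.mulVec, dotProduct, Pi.single_apply]
  have h2 : |A i j| ≤ Real.sqrt (vnormSq (A.mulVec (Pi.single j 1))) := by
    rw [← Real.sqrt_sq_eq_abs]
    apply Real.sqrt_le_sqrt
    rw [show vnormSq (A.mulVec (Pi.single j 1)) = ∑ k, A k j ^ 2 by rw [h1]; rfl]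
    exact Finset.single_le_sum (f := fun k => A k j ^ 2) (fun k _ => sq_nonneg _)
      (Finset.mem_univ i)
  exact h2.trans (le_csSup (matOpNorm_bddAbove A) ⟨_, vnormSq_single j, rfl⟩)

lemma matOpNorm_nonneg [Nonempty (Fin d)] (A : Matrix (Fin d) (Fin d) ℝ) : 0 ≤ matOpNorm A :=
  le_trans (abs_nonneg _)
    (abs_entry_le_matOpNorm A (Classical.arbitrary _) (Classical.arbitrary _))

lemma abs_qf_le [Nonempty (Fin d)] (A : Matrix (Fin d) (Fin d) ℝ) (e : Fin d → ℝ) :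
    |qf A e| ≤ (∑ i, |e i|) ^ 2 * matOpNorm A := by
  rw [qf_eq_sum]
  calc |∑ i, ∑ j, e i * (A i j * e j)| ≤ ∑ i, ∑ j, |e i| * (|A i j| * |e j|) := by
        refine (Finset.abs_sum_le_sum_abs _ _).trans (Finset.sum_le_sum fun i _ =>
          (Finset.abs_sum_le_sum_abs _ _).trans (Finset.sum_le_sum fun j _ =>
            le_of_eq (by rw [abs_mul, abs_mul])))
    _ ≤ ∑ i, ∑ j, |e i| * (matOpNorm A * |e j|) :=
        Finset.sum_le_sum fun i _ => Finset.sum_le_sum fun j _ =>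
          mul_le_mul_of_nonneg_left
            (mul_le_mul_of_nonneg_right (abs_entry_le_matOpNorm A i j) (abs_nonneg _))
            (abs_nonneg _)
    _ = (∑ i, |e i|) * (matOpNorm A * ∑ j, |e j|) := by
        simp_rw [← Finset.mul_sum]
        rw [← Finset.sum_mul]
    _ = (∑ i, |e i|) ^ 2 * matOpNorm A := by ring

lemma qf_nonneg_of_psd {A : Matrix (Fin d) (Fin d) ℝ} (h : A.PosSemidef) (e : Fin d → ℝ) :
    0 ≤ qf A e := by
  have h2 := h.dotProduct_mulVec_nonneg e
  rwa [show star e = e from funext fun i => star_trivial _] at h2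

lemma measurable_qfV {V : (Fin n → ℝ) → Matrix (Fin d) (Fin d) ℝ}
    (hV : ∀ i j, Measurable fun y => V y i j) (e : Fin d → ℝ) :
    Measurable fun y => qf (V y) e := by
  simp_rw [qf_eq_sum]
  exact Finset.measurable_sum _ fun i _ => Finset.measurable_sum _ fun j _ =>
    ((hV i j).mul_const _).const_mul _

end AuxDoubling
section AuxDoubling2

open Finset

variable {n d : ℕ} {V : (Fin n → ℝ) → Matrix (Fin d) (Fin d) ℝ}

lemma integrableOn_entry (hV : IsMatrixWeight V) {x : Fin n → ℝ} {r : ℝ} (hr : 0 < r)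
    (i j : Fin d) : IntegrableOn (fun y => V y i j) (cube x r) := by
  refine Integrable.mono' (hV.2.2 x r hr) (hV.1 i j).aestronglyMeasurable ?_
  exact Filter.Eventually.of_forall fun y => by
    rw [Real.norm_eq_abs]; exact abs_entry_le_matOpNorm _ i j

lemma integrableOn_qf [Nonempty (Fin d)] (hV : IsMatrixWeight V) {x : Fin n → ℝ} {r : ℝ}
    (hr : 0 < r) (e : Fin d → ℝ) : IntegrableOn (fun y => qf (V y) e) (cube x r) := by
  refine Integrable.mono' ((hV.2.2 x r hr).const_mul ((∑ i, |e i|) ^ 2))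
    (measurable_qfV hV.1 e).aestronglyMeasurable ?_
  exact Filter.Eventually.of_forall fun y => by rw [Real.norm_eq_abs]; exact abs_qf_le _ _

lemma integrableOn_qf_rpow [Nonempty (Fin d)] {p C_V : ℝ} (hV : IsMatrixWeight V)
    (hB : MemBp p C_V V) (hp : 1 < p) {x : Fin n → ℝ} {r : ℝ} (hr : 0 < r) (e : Fin d → ℝ) :
    IntegrableOn (fun y => qf (V y) e ^ p) (cube x r) := by
  have hm : Measurable fun y => qf (V y) e ^ p := by
    have h0 := measurable_qfV hV.1 e
    fun_prop
  refine Integrable.mono' ((hB.1 x r hr).const_mul (((∑ i, |e i|) ^ 2) ^ p))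
    hm.aestronglyMeasurable ?_
  filter_upwards [ae_restrict_of_ae hV.2.1] with y hy
  have h0 : 0 ≤ qf (V y) e := qf_nonneg_of_psd hy e
  rw [Real.norm_of_nonneg (Real.rpow_nonneg h0 _), ← Real.mul_rpow (by positivity)
    (matOpNorm_nonneg _)]
  exact Real.rpow_le_rpow h0 ((le_abs_self _).trans (abs_qf_le _ _)) (by linarith)

lemma qf_matInt {s : Set (Fin n → ℝ)}
    (h : ∀ i j, IntegrableOn (fun y => V y i j) s) (e : Fin d → ℝ) :
    qf (matInt V s) e = ∫ y in s, qf (V y) e := by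
  have hint : ∀ i j, Integrable (fun y => e i * (V y i j * e j)) (volume.restrict s) :=
    fun i j => ((h i j).mul_const _).const_mul _
  simp_rw [qf_eq_sum, matInt, Matrix.of_apply]
  rw [integral_finset_sum _ fun i _ => integrable_finset_sum _ fun j _ => hint i j]
  refine Finset.sum_congr rfl fun i _ => ?_
  rw [integral_finset_sum _ fun j _ => hint i j]
  refine Finset.sum_congr rfl fun j _ => ?_
  rw [integral_const_mul, integral_mul_const]

lemma qf_matAvg {s : Set (Fin n → ℝ)} (e : Fin d → ℝ) :
    qf (matAvg V s) e = (volume s).toReal⁻¹ * qf (matInt V s) e := by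
  simp_rw [qf_eq_sum, matAvg, matInt, Matrix.of_apply, setAverage_eq, smul_eq_mul]
  rw [Finset.mul_sum]
  refine Finset.sum_congr rfl fun i _ => ?_
  rw [Finset.mul_sum]
  refine Finset.sum_congr rfl fun j _ => ?_
  simp only [measureReal_def]; ring

end AuxDoubling2
section AuxDoubling3

open Finset

variable {n d : ℕ} {V : (Fin n → ℝ) → Matrix (Fin d) (Fin d) ℝ}

lemma doubling_step [Nonempty (Fin d)] {p C_V : ℝ} (hp : 1 < p) (hCV : 0 < C_V)
    (hV : IsMatrixWeight V) (hB : MemBp p C_V V) (e : Fin d → ℝ) (x : Fin n → ℝ)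
    {s ρ : ℝ} (hs : 0 < s) (hsρ : s ≤ ρ)
    (hvol : (1 - min 2⁻¹ ((2 * C_V) ^ (-(p / (p - 1))))) * (2 * ρ) ^ n ≤ (2 * s) ^ n) :
    ∫ y in cube x ρ, qf (V y) e ≤ 2 * ∫ y in cube x s, qf (V y) e := by
  set q : ℝ := p / (p - 1) with hqdef
  set ε : ℝ := min 2⁻¹ ((2 * C_V) ^ (-q)) with hεdef
  have h2C : (0 : ℝ) < 2 * C_V := by linarith
  have hε_pos : 0 < ε := lt_min (by norm_num) (Real.rpow_pos_of_pos h2C _)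
  have hρ : 0 < ρ := hs.trans_le hsρ
  have hpq : p.HolderConjugate q := (Real.holderConjugate_iff_eq_conjExponent hp).mpr rfl
  have hq_pos : 0 < q := hpq.symm.pos
  set w : (Fin n → ℝ) → ℝ := fun y => qf (V y) e with hwdef
  have hw_m : Measurable w := measurable_qfV hV.1 e
  have hw_nn : ∀ᵐ y ∂(volume : Measure (Fin n → ℝ)), 0 ≤ w y :=
    hV.2.1.mono fun y hy => qf_nonneg_of_psd hy e
  have hwp_nn : ∀ᵐ y ∂(volume : Measure (Fin n → ℝ)), 0 ≤ w y ^ p :=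
    hw_nn.mono fun y hy => Real.rpow_nonneg hy _
  set Qs := cube x s with hQs
  set Qρ := cube x ρ with hQρ
  have hsub : Qs ⊆ Qρ := cube_mono x hsρ
  set E := Qρ \ Qs with hE
  have hEm : MeasurableSet E := (measurableSet_cube x ρ).diff (measurableSet_cube x s)
  have hQρvol : (volume Qρ).toReal = (2 * ρ) ^ n := volume_cube_toReal x hρ.le
  have hQsvol : (volume Qs).toReal = (2 * s) ^ n := volume_cube_toReal x hs.le
  have hEvol : (volume E).toReal = (2 * ρ) ^ n - (2 * s) ^ n := by
    rw [hE, measure_diff hsub (measurableSet_cube x s).nullMeasurableSet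
      (by rw [volume_cube x hs.le]; exact ENNReal.ofReal_ne_top)]
    rw [ENNReal.toReal_sub_of_le (measure_mono hsub)
      (by rw [volume_cube x hρ.le]; exact ENNReal.ofReal_ne_top), hQρvol, hQsvol]
  have hiw : IntegrableOn w Qρ := integrableOn_qf hV hρ e
  have hiws : IntegrableOn w Qs := hiw.mono_set hsub
  have hiwE : IntegrableOn w E := hiw.mono_set Set.diff_subset
  have hiwp : IntegrableOn (fun y => w y ^ p) Qρ := integrableOn_qf_rpow hV hB hp hρ e
  have hiwpE : IntegrableOn (fun y => w y ^ p) E := hiwp.mono_set Set.diff_subset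
  have hsplit : ∫ y in Qρ, w y = (∫ y in Qs, w y) + ∫ y in E, w y := by
    rw [← setIntegral_union Set.disjoint_sdiff_right hEm hiws hiwE, Set.union_diff_cancel hsub]
  -- Hölder on E
  haveI : Fact (volume E < ⊤) :=
    ⟨lt_of_le_of_lt (measure_mono Set.diff_subset)
      (by rw [volume_cube x hρ.le]; exact ENNReal.ofReal_lt_top)⟩
  have hne : (ENNReal.ofReal p) ≠ 0 := (ENNReal.ofReal_pos.mpr hpq.pos).ne'
  have hnt : (ENNReal.ofReal p) ≠ ⊤ := ENNReal.ofReal_ne_top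
  have hwMem : MemLp w (ENNReal.ofReal p) (volume.restrict E) := by
    have hiff := memLp_norm_rpow_iff (p := ENNReal.ofReal p) (q := ENNReal.ofReal p)
      (hw_m.aestronglyMeasurable.restrict (μ := (volume : Measure (Fin n → ℝ))) (s := E)) hne hnt
    rw [ENNReal.div_self hne hnt] at hiff
    apply hiff.mp
    rw [memLp_one_iff_integrable, ENNReal.toReal_ofReal hpq.nonneg]
    refine hiwpE.congr ?_
    filter_upwards [ae_restrict_of_ae hw_nn] with y hy
    rw [Real.norm_of_nonneg hy]
  have h1Mem : MemLp (fun _ : Fin n → ℝ => (1 : ℝ)) (ENNReal.ofReal q) (volume.restrict E) :=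
    memLp_const 1
  have hHolder := integral_mul_le_Lp_mul_Lq_of_nonneg hpq (ae_restrict_of_ae hw_nn)
    (Filter.Eventually.of_forall fun _ => zero_le_one) hwMem h1Mem
  simp only [mul_one, Real.one_rpow, integral_const, measureReal_def, Measure.restrict_apply_univ,
    smul_eq_mul] at hHolder
  -- reverse Hölder on `Qρ`
  have hRH := hB.2 x ρ hρ e
  rw [qf_matAvg, qf_matInt (fun i j => integrableOn_entry hV hρ i j) e, setAverage_eq,
    smul_eq_mul] at hRH
  set A := ∫ y in Qρ, w y with hA
  set P := ∫ y in Qρ, w y ^ p with hP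
  have hA_nn : 0 ≤ A := integral_nonneg_of_ae (ae_restrict_of_ae hw_nn)
  have hP_nn : 0 ≤ P := integral_nonneg_of_ae (ae_restrict_of_ae hwp_nn)
  have hPE_nn : 0 ≤ ∫ y in E, w y ^ p := integral_nonneg_of_ae (ae_restrict_of_ae hwp_nn)
  have hPE_le : ∫ y in E, w y ^ p ≤ P :=
    setIntegral_mono_set hiwp (ae_restrict_of_ae hwp_nn)
      (HasSubset.Subset.eventuallyLE Set.diff_subset)
  set M : ℝ := (2 * ρ) ^ n with hM
  have hM_pos : 0 < M := by positivity
  rw [measureReal_def, hQρvol] at hRH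
  -- hRH : (M⁻¹ * P) ^ (1/p) ≤ C_V * (M⁻¹ * A)
  have hMP_nn : 0 ≤ M⁻¹ * P := mul_nonneg (by positivity) hP_nn
  have hPpow : P ^ (1 / p) ≤ M ^ (1 / p) * (C_V * (M⁻¹ * A)) := by
    have hPe : P = M * (M⁻¹ * P) := by field_simp
    calc P ^ (1 / p) = (M * (M⁻¹ * P)) ^ (1 / p) := by rw [← hPe]
      _ = M ^ (1 / p) * (M⁻¹ * P) ^ (1 / p) := Real.mul_rpow hM_pos.le hMP_nn
      _ ≤ M ^ (1 / p) * (C_V * (M⁻¹ * A)) :=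
          mul_le_mul_of_nonneg_left hRH (Real.rpow_nonneg hM_pos.le _)
  set mE : ℝ := (volume E).toReal with hmE
  have hmE_nn : 0 ≤ mE := ENNReal.toReal_nonneg
  have hmE_le : mE ≤ ε * M := by linarith [hvol, hEvol.le, hEvol.ge]
  have hEbound : ∫ y in E, w y ≤ 2⁻¹ * A := by
    have h1 : M ^ (1 / p : ℝ) * M⁻¹ = M ^ (-(1 / q)) := by
      rw [← Real.rpow_neg_one M, ← Real.rpow_add hM_pos]
      congr 1
      have h := hpq.inv_add_inv_eq_one
      rw [one_div, one_div]
      linarith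
    have h2 : M ^ (-(1 / q)) * mE ^ (1 / q) = (mE / M) ^ (1 / q) := by
      rw [Real.div_rpow hmE_nn hM_pos.le, Real.rpow_neg hM_pos.le]
      ring
    have h3 : (mE / M) ^ (1 / q) ≤ ε ^ (1 / q) :=
      Real.rpow_le_rpow (by positivity) ((div_le_iff₀ hM_pos).mpr (by linarith)) (by positivity)
    have h4 : C_V * ε ^ (1 / q) ≤ 2⁻¹ := by
      have hε_le : ε ≤ (2 * C_V) ^ (-q) := min_le_right _ _
      calc C_V * ε ^ (1 / q) ≤ C_V * ((2 * C_V) ^ (-q)) ^ (1 / q) :=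
            mul_le_mul_of_nonneg_left
              (Real.rpow_le_rpow hε_pos.le hε_le (by positivity)) hCV.le
        _ = C_V * (2 * C_V)⁻¹ := by
            rw [← Real.rpow_mul h2C.le, show -q * (1 / q) = -1 by field_simp,
              Real.rpow_neg_one]
        _ = 2⁻¹ := by
            field_simp
    calc ∫ y in E, w y ≤ (∫ y in E, w y ^ p) ^ (1 / p) * mE ^ (1 / q) := hHolder
      _ ≤ P ^ (1 / p) * mE ^ (1 / q) :=
          mul_le_mul_of_nonneg_right (Real.rpow_le_rpow hPE_nn hPE_le (by positivity))
            (Real.rpow_nonneg hmE_nn _)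
      _ ≤ (M ^ (1 / p) * (C_V * (M⁻¹ * A))) * mE ^ (1 / q) :=
          mul_le_mul_of_nonneg_right hPpow (Real.rpow_nonneg hmE_nn _)
      _ = C_V * A * (M ^ (1 / p : ℝ) * M⁻¹ * mE ^ (1 / q)) := by ring
      _ = C_V * A * ((mE / M) ^ (1 / q)) := by rw [h1, h2]
      _ ≤ C_V * A * ε ^ (1 / q) :=
          mul_le_mul_of_nonneg_left h3 (mul_nonneg hCV.le hA_nn)
      _ = A * (C_V * ε ^ (1 / q)) := by ring
      _ ≤ A * 2⁻¹ := mul_le_mul_of_nonneg_left h4 hA_nn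
      _ = 2⁻¹ * A := by ring
  linarith [hsplit, hEbound]

end AuxDoubling3
section AuxDoubling4

open Finset

variable {n d : ℕ} {V : (Fin n → ℝ) → Matrix (Fin d) (Fin d) ℝ}

lemma matInt_isHermitian (hV : ∀ᵐ y ∂(volume : Measure (Fin n → ℝ)), (V y).PosSemidef)
    (s : Set (Fin n → ℝ)) : (matInt V s).IsHermitian := by
  show Matrix.conjTranspose (matInt V s) = matInt V s
  ext i j
  simp only [Matrix.conjTranspose_apply, star_trivial, matInt, Matrix.of_apply]
  refine integral_congr_ae ?_
  filter_upwards [ae_restrict_of_ae hV] with y hy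
  conv_lhs => rw [← hy.1.eq]
  rw [Matrix.conjTranspose_apply, star_trivial]

end AuxDoubling4
theorem statement3 (n : ℕ) (hn : 1 ≤ n) (p C_V : ℝ) (hp : 1 < p) (hCV : 0 < C_V) :
    ∃ γ : ℝ, 0 < γ ∧ ∀ (d : ℕ), 1 ≤ d →
      ∀ V : (Fin n → ℝ) → Matrix (Fin d) (Fin d) ℝ,
        IsMatrixWeight V → MemBp p C_V V →
        ∀ (x : Fin n → ℝ) (r : ℝ), 0 < r →
          (γ • matInt V (cube x r) - matInt V (cube x (2 * r))).PosSemidef := by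
  set ε : ℝ := min 2⁻¹ ((2 * C_V) ^ (-(p / (p - 1)))) with hεdef
  have hε_pos : 0 < ε := lt_min (by norm_num) (Real.rpow_pos_of_pos (by linarith) _)
  set m : ℕ := max 1 ⌈(n : ℝ) / ε⌉₊ with hmdef
  have hm1 : 1 ≤ m := le_max_left _ _
  have hm_pos : (0 : ℝ) < m := by exact_mod_cast Nat.lt_of_lt_of_le Nat.zero_lt_one hm1
  have hmne : (m : ℝ) ≠ 0 := hm_pos.ne'
  have hm_ge : (n : ℝ) ≤ ε * ((m : ℝ) + 1) := by
    have h1 : (n : ℝ) / ε ≤ ⌈(n : ℝ) / ε⌉₊ := Nat.le_ceil _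
    have h2 : ((⌈(n : ℝ) / ε⌉₊ : ℕ) : ℝ) ≤ (m : ℝ) := Nat.cast_le.mpr (le_max_right _ _)
    have h3 := (div_le_iff₀ hε_pos).mp (h1.trans h2)
    nlinarith [hε_pos]
  refine ⟨2 ^ m, by positivity, ?_⟩
  intro d hd V hV hB x r hr
  haveI : Nonempty (Fin d) := Fin.pos_iff_nonempty.mp hd
  have h2r : 0 < 2 * r := by linarith
  have hintr : ∀ i j, IntegrableOn (fun y => V y i j) (cube x r) :=
    fun i j => integrableOn_entry hV hr i j
  have hint2r : ∀ i j, IntegrableOn (fun y => V y i j) (cube x (2 * r)) :=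
    fun i j => integrableOn_entry hV h2r i j
  have key : ∀ e : Fin d → ℝ,
      ∫ y in cube x (2 * r), qf (V y) e ≤ 2 ^ m * ∫ y in cube x r, qf (V y) e := by
    intro e
    set rad : ℕ → ℝ := fun j => r * ((m : ℝ) + j) / m with hraddef
    have hradj : ∀ j : ℕ, rad j = r * ((m : ℝ) + j) / m := fun j => rfl
    have hrad_pos : ∀ j : ℕ, 0 < rad j := fun j => by
      rw [hradj]
      have h0 : (0 : ℝ) < (m : ℝ) + j := by positivity
      exact div_pos (mul_pos hr h0) hm_pos
    have hrad0 : rad 0 = r := by rw [hradj]; push_cast; field_simp; simp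
    have hradm : rad m = 2 * r := by rw [hradj]; field_simp; ring
    have hstep : ∀ j : ℕ,
        ∫ y in cube x (rad (j + 1)), qf (V y) e ≤ 2 * ∫ y in cube x (rad j), qf (V y) e := by
      intro j
      have hle : rad j ≤ rad (j + 1) := by
        rw [hradj, hradj]
        have hnum : r * ((m : ℝ) + j) ≤ r * ((m : ℝ) + (j + 1 : ℕ)) := by
          push_cast
          nlinarith [hr.le]
        exact (div_le_div_iff_of_pos_right hm_pos).mpr hnum
      refine doubling_step hp hCV hV hB e x (hrad_pos j) hle ?_
      set t : ℝ := ((m : ℝ) + j) / ((m : ℝ) + j + 1) with ht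
      have htpos : (0 : ℝ) < (m : ℝ) + j + 1 := by positivity
      have ht_nonneg : 0 ≤ t := div_nonneg (by positivity) htpos.le
      have h2radj : 2 * rad j = 2 * rad (j + 1) * t := by
        rw [hradj, hradj, ht]
        push_cast
        field_simp
        ring
      have hBern : 1 - (n : ℝ) * (1 - t) ≤ t ^ n := by
        have hb := one_add_mul_le_pow (a := t - 1) (by linarith) n
        calc 1 - (n : ℝ) * (1 - t) = 1 + (n : ℝ) * (t - 1) := by ring
          _ ≤ (1 + (t - 1)) ^ n := hb
          _ = t ^ n := by rw [show (1 : ℝ) + (t - 1) = t by ring]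
      have hnt : (n : ℝ) * (1 - t) ≤ ε := by
        have h1t : 1 - t = 1 / ((m : ℝ) + j + 1) := by rw [ht]; field_simp; ring
        rw [h1t, mul_one_div, div_le_iff₀ htpos]
        have hmono : ε * ((m : ℝ) + 1) ≤ ε * ((m : ℝ) + j + 1) := by nlinarith [hε_pos]
        linarith [hm_ge]
      have hpow_nn : (0 : ℝ) ≤ (2 * rad (j + 1)) ^ n := by positivity
      have htn_nn : 0 ≤ t ^ n := pow_nonneg ht_nonneg n
      calc (1 - ε) * (2 * rad (j + 1)) ^ n
          ≤ t ^ n * (2 * rad (j + 1)) ^ n := by nlinarith [hnt, hpow_nn, hBern]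
        _ = (2 * rad (j + 1) * t) ^ n := by rw [mul_pow (2 * rad (j + 1)) t]; exact mul_comm _ _
        _ = (2 * rad j) ^ n := by rw [← h2radj]
    have h0nn : 0 ≤ ∫ y in cube x (rad 0), qf (V y) e :=
      integral_nonneg_of_ae (ae_restrict_of_ae (hV.2.1.mono fun y hy => qf_nonneg_of_psd hy e))
    have hiter : ∀ j : ℕ,
        ∫ y in cube x (rad j), qf (V y) e ≤ 2 ^ j * ∫ y in cube x (rad 0), qf (V y) e := by
      intro j
      induction j with
      | zero => simp
      | succ j ih =>
        calc ∫ y in cube x (rad (j + 1)), qf (V y) e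
            ≤ 2 * ∫ y in cube x (rad j), qf (V y) e := hstep j
          _ ≤ 2 * (2 ^ j * ∫ y in cube x (rad 0), qf (V y) e) := by linarith [ih]
          _ = 2 ^ (j + 1) * ∫ y in cube x (rad 0), qf (V y) e := by ring
    have hfin := hiter m
    rwa [hrad0, hradm] at hfin
  refine Matrix.PosSemidef.of_dotProduct_mulVec_nonneg ?_ fun v => ?_
  · have h1 := matInt_isHermitian hV.2.1 (cube x r)
    have h2 := matInt_isHermitian hV.2.1 (cube x (2 * r))
    show Matrix.conjTranspose (2 ^ m • matInt V (cube x r) - matInt V (cube x (2 * r))) =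
      2 ^ m • matInt V (cube x r) - matInt V (cube x (2 * r))
    rw [Matrix.conjTranspose_sub, Matrix.conjTranspose_smul, star_trivial, h1.eq, h2.eq]
  · have hstar : star v = v := funext fun i => star_trivial _
    rw [hstar, Matrix.sub_mulVec, Matrix.smul_mulVec, dotProduct_sub,
      dotProduct_smul, smul_eq_mul]
    show 0 ≤ 2 ^ m * qf (matInt V (cube x r)) v - qf (matInt V (cube x (2 * r))) v
    rw [qf_matInt hintr v, qf_matInt hint2r v]
    linarith [key v]
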